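/- arXiv:2306.12395 — 2 statements merged into one kernel-verified Lean document; each statement's English description precedes it below -/
import Mathlib

section
/- Let M = span{h_k − h_ℓ : k, ℓ ≥ 2} ⊂ H², where h_k(z) = (1/(1−z)) log((1 + z + ⋯ + z^{k−1})/k). Then the closure of M is invariant under every W_n, n ≥ 1: W_n(M̄) ⊆ M̄. -/
open Filter Topology
open scoped ENNReal NNReal
open scoped ComplexInnerProductSpace

/-- The Hardy space `H²(𝔻)`, modeled as the space of square-summable Taylor
coefficient sequences. -/
noncomputable abbrev H2 : Type := lp (fun _ : ℕ => ℂ) 2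

/-- Evaluation of an element of `H²` at a point of the unit disk, via its power series. -/
noncomputable def eval (f : H2) (z : ℂ) : ℂ := ∑' n : ℕ, (f n) * z ^ n

lemma emetric_ball_eq : Metric.eball (0:ℂ) 1 = Metric.ball (0:ℂ) 1 := by
  rw [show (1 : ℝ≥0∞) = ((1:ℝ≥0) : ℝ≥0∞) by norm_num, Metric.emetric_ball_nnreal]
  norm_num

lemma H2.summable (f : H2) {z : ℂ} (hz : ‖z‖ < 1) :
    Summable (fun n : ℕ => f n * z ^ n) := by
  apply Summable.of_norm
  apply Summable.of_nonneg_of_le (fun n => norm_nonneg _)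
    (fun n => ?_) (Summable.mul_left ‖f‖ (summable_geometric_of_lt_one (norm_nonneg z) hz))
  rw [norm_mul, norm_pow]
  exact mul_le_mul_of_nonneg_right (lp.norm_apply_le_norm (by norm_num) f n)
    (pow_nonneg (norm_nonneg z) n)

lemma H2.hasFPowerSeriesOnBall (f : H2) :
    HasFPowerSeriesOnBall (eval f) (FormalMultilinearSeries.ofScalars ℂ (fun n => f n)) 0 1 := by
  constructor
  · refine ENNReal.le_of_forall_nnreal_lt (fun r hr => ?_)
    apply FormalMultilinearSeries.le_radius_of_bound _ ‖f‖
    intro n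
    rw [FormalMultilinearSeries.ofScalars_norm]
    calc ‖f n‖ * (r:ℝ) ^ n ≤ ‖f‖ * 1 := by
          apply mul_le_mul (lp.norm_apply_le_norm (by norm_num) f n)
            (pow_le_one₀ r.coe_nonneg (le_of_lt (by exact_mod_cast hr)))
            (pow_nonneg r.coe_nonneg n) (norm_nonneg f)
      _ = ‖f‖ := mul_one _
  · norm_num
  · intro y hy
    rw [emetric_ball_eq, Metric.mem_ball, dist_zero_right] at hy
    simp only [FormalMultilinearSeries.ofScalars_apply_eq, smul_eq_mul, zero_add]
    exact (H2.summable f hy).hasSum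

lemma H2.eval_inj {f g : H2} (h : ∀ z : ℂ, ‖z‖ < 1 → eval f z = eval g z) : f = g := by
  have hf := H2.hasFPowerSeriesOnBall f
  have hg : HasFPowerSeriesOnBall (eval f)
      (FormalMultilinearSeries.ofScalars ℂ (fun n => g n)) 0 1 := by
    apply (H2.hasFPowerSeriesOnBall g).congr
    intro y hy
    rw [emetric_ball_eq, Metric.mem_ball, dist_zero_right] at hy
    exact (h y hy).symm
  have := hf.hasFPowerSeriesAt.eq_formalMultilinearSeries hg.hasFPowerSeriesAt
  rw [FormalMultilinearSeries.ofScalars_series_eq_iff] at this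
  exact lp.ext (funext fun n => congrFun this n)

lemma eval_sub (f g : H2) {z : ℂ} (hz : ‖z‖ < 1) :
    eval (f - g) z = eval f z - eval g z := by
  unfold eval
  rw [← Summable.tsum_sub (H2.summable f hz) (H2.summable g hz)]
  apply tsum_congr
  intro n
  rw [lp.coeFn_sub, Pi.sub_apply, sub_mul]

lemma eval_continuousOn (f : H2) : ContinuousOn (eval f) (Metric.ball (0:ℂ) 1) := by
  have := (H2.hasFPowerSeriesOnBall f).continuousOn
  rwa [emetric_ball_eq] at this

open Complex in
lemma key_identity (h : ℕ → H2)
    (hh : ∀ k : ℕ, 1 ≤ k → eval (h k) 0 = -Real.log k ∧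
      ∀ z : ℂ, ‖z‖ < 1 →
        Complex.exp ((1 - z) * eval (h k) z) = (∑ j ∈ Finset.range k, z ^ j) / k)
    (W : ℕ → H2 →L[ℂ] H2)
    (hW : ∀ n : ℕ, 1 ≤ n → ∀ f : H2, ∀ z : ℂ, ‖z‖ < 1 →
      eval (W n f) z = (∑ j ∈ Finset.range n, z ^ j) * eval f (z ^ n))
    (n k : ℕ) (hn : 1 ≤ n) (hk : 1 ≤ k) :
    W n (h k) = h (n * k) - h n := by
  have hnk : 1 ≤ n * k := Nat.one_le_iff_ne_zero.2 (Nat.mul_ne_zero (by omega) (by omega))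
  set F : ℂ → ℂ := fun z =>
    (1 - z) * (eval (W n (h k)) z + eval (h n) z - eval (h (n * k)) z) with hF
  have hexp : ∀ z : ℂ, ‖z‖ < 1 → Complex.exp (F z) = 1 := by
    intro z hz
    have hz1 : z ≠ 1 := by intro e; rw [e] at hz; simp at hz
    have hwlt : ‖z ^ n‖ < 1 := by
      rw [norm_pow]; exact pow_lt_one₀ (norm_nonneg z) hz (by omega)
    have hw1 : z ^ n ≠ 1 := by intro e; rw [e] at hwlt; simp at hwlt
    have hnk1 : z ^ (n * k) ≠ 1 := by
      intro e
      have : ‖z ^ (n * k)‖ < 1 := by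
        rw [norm_pow]; exact pow_lt_one₀ (norm_nonneg z) hz (by omega)
      rw [e] at this; simp at this
    have e1 := (hh k hk).2 (z ^ n) hwlt
    have e2 := (hh n hn).2 z hz
    have e3 := (hh (n * k) hnk).2 z hz
    have hWz := hW n hn (h k) z hz
    have hz1' : z - 1 ≠ 0 := sub_ne_zero.2 hz1
    have hw1' : z ^ n - 1 ≠ 0 := sub_ne_zero.2 hw1
    have hnk1' : z ^ (n * k) - 1 ≠ 0 := sub_ne_zero.2 hnk1
    have hkc : (k : ℂ) ≠ 0 := Nat.cast_ne_zero.2 (by omega)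
    have hnc : (n : ℂ) ≠ 0 := Nat.cast_ne_zero.2 (by omega)
    have gs1 : (∑ j ∈ Finset.range k, (z ^ n) ^ j) = (z ^ (n * k) - 1) / (z ^ n - 1) := by
      rw [geom_sum_eq hw1, ← pow_mul]
    have gs2 : (∑ j ∈ Finset.range n, z ^ j) = (z ^ n - 1) / (z - 1) := geom_sum_eq hz1 n
    have gs3 : (∑ j ∈ Finset.range (n * k), z ^ j) = (z ^ (n * k) - 1) / (z - 1) :=
      geom_sum_eq hz1 (n * k)
    have hA : (1 - z) * eval (W n (h k)) z = (1 - z ^ n) * eval (h k) (z ^ n) := by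
      rw [hWz]
      have := geom_sum_mul z n
      linear_combination (-(eval (h k) (z ^ n))) * this
    have : Complex.exp (F z) * Complex.exp ((1 - z) * eval (h (n * k)) z) =
        Complex.exp ((1 - z ^ n) * eval (h k) (z ^ n)) *
          Complex.exp ((1 - z) * eval (h n) z) := by
      rw [← Complex.exp_add, ← Complex.exp_add, hF]
      congr 1
      simp only []
      linear_combination hA
    rw [e1, e2, e3] at this
    have hS3 : (∑ j ∈ Finset.range (n * k), z ^ j) / ((n * k : ℕ) : ℂ) ≠ 0 := by
      rw [gs3]
      push_cast
      exact div_ne_zero (div_ne_zero hnk1' hz1') (mul_ne_zero hnc hkc)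
    have rhs_eq : (∑ j ∈ Finset.range k, (z ^ n) ^ j) / (k:ℂ) *
        ((∑ j ∈ Finset.range n, z ^ j) / (n:ℂ)) =
        (∑ j ∈ Finset.range (n * k), z ^ j) / ((n * k : ℕ) : ℂ) := by
      rw [gs1, gs2, gs3]
      push_cast
      field_simp
    rw [rhs_eq] at this
    exact mul_right_cancel₀ hS3 (by rw [this, one_mul])
  -- F maps the ball into 2πiℤ
  have hmaps : Set.MapsTo F (Metric.ball (0:ℂ) 1)
      ((AddSubgroup.zmultiples ((2 * Real.pi : ℂ) * Complex.I) : AddSubgroup ℂ) : Set ℂ) := by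
    intro z hz
    rw [Metric.mem_ball, dist_zero_right] at hz
    obtain ⟨m, hm⟩ := Complex.exp_eq_one_iff.1 (hexp z hz)
    exact ⟨m, by simp only [zsmul_eq_mul, hm]⟩
  have hcont : ContinuousOn F (Metric.ball (0:ℂ) 1) := by
    exact ((continuous_const.sub continuous_id).continuousOn).mul
      (((eval_continuousOn _).add (eval_continuousOn _)).sub (eval_continuousOn _))
  have hconn : IsPreconnected (Metric.ball (0:ℂ) 1) := (convex_ball (0:ℂ) 1).isPreconnected
  haveI : DiscreteTopology
      ((AddSubgroup.zmultiples ((2 * Real.pi : ℂ) * Complex.I) : AddSubgroup ℂ) : Set ℂ) :=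
    NormedSpace.discreteTopology_zmultiples _
  have hF0 : F 0 = 0 := by
    have hW0 := hW n hn (h k) 0 (by norm_num)
    have h0n : (0:ℂ) ^ n = 0 := zero_pow (by omega)
    have hsum0 : (∑ j ∈ Finset.range n, (0:ℂ) ^ j) = 1 := by
      rw [geom_sum_eq (by norm_num) n]
      simp [h0n]
    rw [hF]
    simp only [hW0, h0n, hsum0, one_mul, (hh k hk).1, (hh n hn).1, (hh (n*k) hnk).1]
    have : Real.log (n * k : ℕ) = Real.log n + Real.log k := by
      push_cast
      exact Real.log_mul (by positivity) (by positivity)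
    rw [this]
    push_cast
    ring
  have hFz0 : ∀ z : ℂ, ‖z‖ < 1 → F z = 0 := by
    intro z hz
    have := hconn.constant_of_mapsTo (isDiscrete_iff_discreteTopology.mpr this) hcont hmaps
      (by rw [Metric.mem_ball, dist_zero_right]; exact hz)
      (Metric.mem_ball_self (by norm_num))
    rw [this, hF0]
  apply H2.eval_inj
  intro z hz
  rw [eval_sub _ _ hz]
  have hz1 : (1:ℂ) - z ≠ 0 := by
    intro e
    have : z = 1 := by linear_combination -e
    rw [this] at hz; simp at hz
  have := hFz0 z hz
  rw [hF] at this
  have := (mul_eq_zero.mp this).resolve_left hz1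
  linear_combination this

/-- the closure of `M = span{h_k - h_ℓ : k, ℓ ≥ 2}` is invariant under
every `W_n`, `n ≥ 1`. -/
theorem closure_M_invariant (h : ℕ → H2)
    (hh : ∀ k : ℕ, 1 ≤ k → eval (h k) 0 = -Real.log k ∧
      ∀ z : ℂ, ‖z‖ < 1 →
        Complex.exp ((1 - z) * eval (h k) z) = (∑ j ∈ Finset.range k, z ^ j) / k)
    (W : ℕ → H2 →L[ℂ] H2)
    (hW : ∀ n : ℕ, 1 ≤ n → ∀ f : H2, ∀ z : ℂ, ‖z‖ < 1 →
      eval (W n f) z = (∑ j ∈ Finset.range n, z ^ j) * eval f (z ^ n))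
    (n : ℕ) (hn : 1 ≤ n) (f : H2)
    (hf : f ∈ closure ((Submodule.span ℂ
        {x : H2 | ∃ k l : ℕ, 2 ≤ k ∧ 2 ≤ l ∧ x = h k - h l} : Submodule ℂ H2) : Set H2)) :
    W n f ∈ closure ((Submodule.span ℂ
        {x : H2 | ∃ k l : ℕ, 2 ≤ k ∧ 2 ≤ l ∧ x = h k - h l} : Submodule ℂ H2) : Set H2) := by
  set s : Set H2 := {x : H2 | ∃ k l : ℕ, 2 ≤ k ∧ 2 ≤ l ∧ x = h k - h l} with hs
  have hmaps : Set.MapsTo (W n) ((Submodule.span ℂ s : Submodule ℂ H2) : Set H2)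
      ((Submodule.span ℂ s : Submodule ℂ H2) : Set H2) := by
    intro x hx
    have : Submodule.map (W n : H2 →ₗ[ℂ] H2) (Submodule.span ℂ s) ≤ Submodule.span ℂ s := by
      rw [Submodule.map_span, Submodule.span_le]
      rintro y ⟨x, ⟨k, l, hk, hl, rfl⟩, rfl⟩
      apply Submodule.subset_span
      refine ⟨n * k, n * l, le_trans hk (Nat.le_mul_of_pos_left k (by omega)),
        le_trans hl (Nat.le_mul_of_pos_left l (by omega)), ?_⟩
      have hWk := key_identity h hh W hW n k hn (by omega)
      have hWl := key_identity h hh W hW n l hn (by omega)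
      simp only [ContinuousLinearMap.coe_coe, map_sub, hWk, hWl]
      abel
    exact this ⟨x, hx, rfl⟩
  exact map_mem_closure (W n).continuous hf hmaps
end

section
/- Every function in the closure of M = span{h_k − h_ℓ : k, ℓ ≥ 2} in H² is orthogonal to 1 − z; that is, M̄ ⊆ {1 − z}^⊥, so the closure of M is a proper subspace of H². -/
open Filter Topology
open scoped ComplexInnerProductSpace

open scoped ENNReal NNReal

lemma summable_eval (f : H2) {z : ℂ} (hz : ‖z‖ < 1) : Summable fun n : ℕ => f n * z ^ n := by
  apply Summable.of_norm_bounded (g := fun n => ‖f‖ * ‖z‖ ^ n)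
    ((summable_geometric_of_lt_one (norm_nonneg z) hz).mul_left _)
  intro n
  rw [norm_mul, norm_pow]
  exact mul_le_mul_of_nonneg_right (lp.norm_apply_le_norm (by norm_num) f n)
    (pow_nonneg (norm_nonneg z) n)

lemma eval_zero (f : H2) : eval f 0 = f 0 := by
  rw [eval, tsum_eq_single 0]
  · simp
  · intro n hn; simp [zero_pow hn]

lemma ofScalars_coeff (c : ℕ → ℂ) (n : ℕ) :
    (FormalMultilinearSeries.ofScalars ℂ c).coeff n = c n := by
  simp [FormalMultilinearSeries.coeff, FormalMultilinearSeries.ofScalars, List.prod_ofFn]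

lemma hasDerivAt_eval (f : H2) : HasDerivAt (eval f) (f 1) 0 := by
  have hball : HasFPowerSeriesOnBall (eval f)
      (FormalMultilinearSeries.ofScalars ℂ (fun n => f n)) 0 ((1/2 : ℝ≥0) : ℝ≥0∞) := by
    refine ⟨?_, by exact_mod_cast (by norm_num : (0:ℝ≥0∞) < (1/2 : ℝ≥0)), ?_⟩
    · apply FormalMultilinearSeries.le_radius_of_bound _ ‖f‖ (r := 1/2)
      intro n
      rw [FormalMultilinearSeries.ofScalars_norm]
      calc ‖f n‖ * (((1:NNReal)/2 : NNReal) : ℝ) ^ n ≤ ‖f n‖ * 1 := by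
            apply mul_le_mul_of_nonneg_left _ (norm_nonneg _)
            apply pow_le_one₀ <;> norm_num
        _ ≤ ‖f‖ := by rw [mul_one]; exact lp.norm_apply_le_norm (by norm_num) f n
    · intro y hy
      rw [mem_emetric_ball_zero_iff] at hy
      have hy1 : ‖y‖ < 1 := by
        have h2 : ‖y‖₊ < (1/2 : ℝ≥0) := by exact_mod_cast hy
        have : ‖y‖₊ < 1 := h2.trans_le (by norm_num)
        exact_mod_cast this
      have hs := (summable_eval f hy1).hasSum
      have he : (fun n : ℕ => (FormalMultilinearSeries.ofScalars ℂ (fun n => f n) n) fun _ => y)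
          = fun n : ℕ => f n * y ^ n := by
        funext n
        simp [FormalMultilinearSeries.ofScalars, mul_comm]
      rw [zero_add, eval, he]
      exact hs
  have := hball.hasFPowerSeriesAt.hasDerivAt
  have hc : ((FormalMultilinearSeries.ofScalars ℂ (fun n => f n)) 1 fun _ => (1:ℂ)) = f 1 := by
    simp [FormalMultilinearSeries.ofScalars]
  rwa [hc] at this

lemma coeff_relation (h : ℕ → H2)
    (hh : ∀ k : ℕ, 1 ≤ k → eval (h k) 0 = -Real.log k ∧
      ∀ z : ℂ, ‖z‖ < 1 →
        Complex.exp ((1 - z) * eval (h k) z) = (∑ j ∈ Finset.range k, z ^ j) / k)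
    (k : ℕ) (hk : 2 ≤ k) : (h k) 0 - (h k) 1 = -1 := by
  obtain ⟨h0, hfun⟩ := hh k (le_trans one_le_two hk)
  have hk0 : (k : ℂ) ≠ 0 := Nat.cast_ne_zero.mpr (by omega)
  have d1 : HasDerivAt (fun z : ℂ => (1:ℂ) - z) (-1) 0 := by
    simpa using (hasDerivAt_id (0:ℂ)).const_sub (1:ℂ)
  have dH : HasDerivAt (fun z : ℂ => (1 - z) * eval (h k) z)
      ((-1) * eval (h k) 0 + (1 - 0) * ((h k) 1)) 0 := d1.mul (hasDerivAt_eval (h k))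
  have dE := dH.cexp
  have hmem : ∀ᶠ z in 𝓝 (0:ℂ), ‖z‖ < 1 := by
    filter_upwards [Metric.ball_mem_nhds (0:ℂ) one_pos] with z hz
    simpa [dist_zero_right] using hz
  have heq : (fun z : ℂ => (∑ j ∈ Finset.range k, z ^ j) / k)
      =ᶠ[𝓝 (0:ℂ)] (fun z : ℂ => Complex.exp ((1 - z) * eval (h k) z)) := by
    filter_upwards [hmem] with z hz
    exact (hfun z hz).symm
  have dG := dE.congr_of_eventuallyEq heq
  have dP : HasDerivAt (fun z : ℂ => (∑ j ∈ Finset.range k, z ^ j) / k) ((1:ℂ)/k) 0 := by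
    have hsum : HasDerivAt (fun z : ℂ => ∑ j ∈ Finset.range k, z ^ j)
        (∑ j ∈ Finset.range k, (j : ℂ) * 0 ^ (j - 1)) 0 :=
      HasDerivAt.fun_sum fun j _ => hasDerivAt_pow j 0
    have hval : (∑ j ∈ Finset.range k, (j : ℂ) * 0 ^ (j - 1)) = 1 := by
      rw [Finset.sum_eq_single 1]
      · norm_num
      · intro j _ hj
        rcases Nat.eq_zero_or_pos j with h | h
        · simp [h]
        · have : j - 1 ≠ 0 := by omega
          simp [zero_pow this]
      · intro habs
        exact absurd (Finset.mem_range.mpr (by omega)) habs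
    rw [hval] at hsum
    simpa using hsum.div_const (k : ℂ)
  have huniq := dG.unique dP
  have hE0 : Complex.exp ((1 - 0) * eval (h k) 0) = 1 / k := by
    rw [sub_zero, one_mul, h0, ← Complex.ofReal_neg, ← Complex.ofReal_exp,
      Real.exp_neg, Real.exp_log (by positivity : (0:ℝ) < (k:ℝ))]
    rw [Complex.ofReal_inv, one_div, Complex.ofReal_natCast]
  rw [hE0] at huniq
  have h1 : (h k) 1 = 1 - Real.log k := by
    have := huniq
    field_simp at this
    rw [h0] at this
    have h2 : (-(Real.log k : ℂ) * -1 + (h k) 1) = 1 := by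
      ring_nf at this ⊢
      linear_combination this
    linear_combination h2
  have h00 : ((h k) 0 : ℂ) = -(Real.log k : ℂ) := by
    rw [← eval_zero (h k), h0]
  rw [h00, h1]; ring

lemma inner_p_eq (p : H2)
    (hp : ∀ j : ℕ, p j = (if j = 0 then (1 : ℂ) else 0) - (if j = 1 then 1 else 0))
    (x : H2) : ⟪p, x⟫ = x 0 - x 1 := by
  rw [lp.inner_eq_tsum]
  rw [tsum_eq_sum (s := ({0, 1} : Finset ℕ))]
  · rw [Finset.sum_pair (by norm_num : (0:ℕ) ≠ 1)]
    simp [RCLike.inner_apply, hp 0, hp 1]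
    ring
  · intro b hb
    have hb0 : b ≠ 0 := by rintro rfl; simp at hb
    have hb1 : b ≠ 1 := by rintro rfl; simp at hb
    simp [RCLike.inner_apply, hp b, hb0, hb1]

/-- every function in the closure of `M = span{h_k - h_ℓ : k, ℓ ≥ 2}` is
orthogonal to `1 - z`; in particular the closure of `M` is a proper subspace of `H²`. -/
theorem closure_M_orthogonal (h : ℕ → H2)
    (hh : ∀ k : ℕ, 1 ≤ k → eval (h k) 0 = -Real.log k ∧
      ∀ z : ℂ, ‖z‖ < 1 →
        Complex.exp ((1 - z) * eval (h k) z) = (∑ j ∈ Finset.range k, z ^ j) / k)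
    (p : H2)
    (hp : ∀ j : ℕ, p j = (if j = 0 then (1 : ℂ) else 0) - (if j = 1 then 1 else 0)) :
    (∀ f ∈ closure ((Submodule.span ℂ
        {x : H2 | ∃ k l : ℕ, 2 ≤ k ∧ 2 ≤ l ∧ x = h k - h l} : Submodule ℂ H2) : Set H2),
      ⟪f, p⟫ = 0) ∧
    closure ((Submodule.span ℂ
        {x : H2 | ∃ k l : ℕ, 2 ≤ k ∧ 2 ≤ l ∧ x = h k - h l} : Submodule ℂ H2) : Set H2)
      ≠ (Set.univ : Set H2) := by
  set K : Submodule ℂ H2 := LinearMap.ker (innerSL ℂ p : H2 →ₗ[ℂ] ℂ) with hK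
  have hgen : {x : H2 | ∃ k l : ℕ, 2 ≤ k ∧ 2 ≤ l ∧ x = h k - h l} ⊆ (K : Set H2) := by
    rintro x ⟨k, l, hk, hl, rfl⟩
    have hx : ⟪p, h k - h l⟫ = 0 := by
      rw [inner_p_eq p hp]
      have hsub : ∀ i, (h k - h l) i = h k i - h l i := fun i => by
        rw [lp.coeFn_sub]; rfl
      rw [hsub 0, hsub 1]
      have e1 := coeff_relation h hh k hk
      have e2 := coeff_relation h hh l hl
      linear_combination e1 - e2
    simp only [hK, SetLike.mem_coe, LinearMap.mem_ker, ContinuousLinearMap.coe_coe, innerSL_apply_apply]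
    exact hx
  have hspan : (Submodule.span ℂ
      {x : H2 | ∃ k l : ℕ, 2 ≤ k ∧ 2 ≤ l ∧ x = h k - h l} : Submodule ℂ H2) ≤ K :=
    Submodule.span_le.mpr hgen
  have hclosed : IsClosed (K : Set H2) := ContinuousLinearMap.isClosed_ker (innerSL ℂ p)
  have hclos : closure ((Submodule.span ℂ
      {x : H2 | ∃ k l : ℕ, 2 ≤ k ∧ 2 ≤ l ∧ x = h k - h l} : Submodule ℂ H2) : Set H2)
      ⊆ (K : Set H2) := closure_minimal hspan hclosed
  have hp0 : ∀ f ∈ closure ((Submodule.span ℂ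
      {x : H2 | ∃ k l : ℕ, 2 ≤ k ∧ 2 ≤ l ∧ x = h k - h l} : Submodule ℂ H2) : Set H2),
      ⟪f, p⟫ = 0 := by
    intro f hf
    have : ⟪p, f⟫ = 0 := by simpa [hK, LinearMap.mem_ker] using hclos hf
    rw [← inner_conj_symm, this, map_zero]
  refine ⟨hp0, ?_⟩
  intro habs
  have hpmem : p ∈ closure ((Submodule.span ℂ
      {x : H2 | ∃ k l : ℕ, 2 ≤ k ∧ 2 ≤ l ∧ x = h k - h l} : Submodule ℂ H2) : Set H2) := by
    rw [habs]; trivial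
  have := hp0 p hpmem
  rw [inner_self_eq_zero] at this
  have : p 0 = 0 := by rw [this]; rfl
  rw [hp 0] at this
  norm_num at this
end
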